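/- Let X be a metric space and n ≥ 0. If for each δ > 0 there exist a set S and a (δ,δ)-Lipschitz map f: X → Δ(S)^(n) such that the family {f⁻¹(st(s)) : s ∈ S} is uniformly bounded, then X has asymptotic dimension at most n. -/

import Mathlib

open Function Metric ENNReal

noncomputable section

/-- `ℓ¹(S)`: real-valued functions on `S` with finite `ℓ¹`-norm, with the `ℓ¹` metric. -/
abbrev ellOne (S : Type u) : Type u := lp (fun _ : S => ℝ) 1

/-- The full simplex `Δ(S) ⊆ ℓ¹(S)`. -/
def fullSimplex (S : Type u) : Set (ellOne S) :=
  {p | (∀ s, 0 ≤ p s) ∧ (support (p : S → ℝ)).Finite ∧ ∑' s, p s = 1}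

/-- The `n`-skeleton `Δ(S)^(n)` of the full simplex. -/
def skeleton (S : Type u) (n : ℕ) : Set (ellOne S) :=
  {p ∈ fullSimplex S | (support (p : S → ℝ)).encard ≤ n + 1}

/-- A simplicial complex on `S`: a subset of `Δ(S)` closed under passing to
points whose support is contained in the support of a member. -/
def IsSimplicialComplex {S : Type u} (K : Set (ellOne S)) : Prop :=
  K ⊆ fullSimplex S ∧
    ∀ p ∈ K, ∀ q ∈ fullSimplex S,
      support (q : S → ℝ) ⊆ support (p : S → ℝ) → q ∈ K

/-- The star of a vertex `v` in `K`. -/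
def star {S : Type u} (K : Set (ellOne S)) (v : S) : Set (ellOne S) :=
  {p ∈ K | 0 < p v}

/-- `f` is `(λ, C)`-Lipschitz. -/
def IsLipschitzLC {X Y : Type*} [MetricSpace X] [MetricSpace Y]
    (l C : ℝ) (f : X → Y) : Prop :=
  ∀ x y, dist (f x) (f y) ≤ l * dist x y + C

/-- A family of sets is uniformly bounded. -/
def UniformlyBounded {X : Type*} [MetricSpace X] {ι : Type*} (U : ι → Set X) : Prop :=
  ∃ M : ℝ, ∀ i, ∀ x ∈ U i, ∀ y ∈ U i, dist x y ≤ M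

/-- `U` is a cover of the whole space. -/
def IsCover {X : Type*} {ι : Type*} (U : ι → Set X) : Prop := ∀ x, ∃ i, x ∈ U i

/-- The Lebesgue number `inf_x sup_i dist(x, X∖Uᵢ)` of a family, as a value in `ℝ≥0∞`. -/
def lebesgue {X : Type*} [MetricSpace X] {ι : Type*} (U : ι → Set X) : ℝ≥0∞ :=
  ⨅ x : X, ⨆ i, EMetric.infEdist x (U i)ᶜ

/-- The multiplicity of `U` is at most `m`. -/
def MultiplicityLE {X : Type*} [MetricSpace X] {ι : Type*} (U : ι → Set X) (m : ℕ) : Prop :=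
  ∀ x : X, {i | 0 < Metric.infDist x ((U i)ᶜ)}.encard ≤ m

/-- `f : X → K` is a `δ`-partition of unity. -/
def IsDeltaPartitionOfUnity {X : Type*} [MetricSpace X] {S : Type u}
    (δ : ℝ) (K : Set (ellOne S)) (f : X → ellOne S) : Prop :=
  (∀ x, f x ∈ K) ∧ IsLipschitzLC δ δ f ∧
    UniformlyBounded (fun v : S => f ⁻¹' star K v) ∧
    ENNReal.ofReal (1 / δ) ≤ lebesgue (fun v : S => f ⁻¹' star K v)

/-- `X` is large scale paracompact. -/
def LSParacompact (X : Type u) [MetricSpace X] : Prop :=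
  ∀ (ι : Type u) (U : ι → Set X), IsCover U → UniformlyBounded U →
    ∀ l C : ℝ, 0 < l → 0 < C →
      ∃ (S : Type u) (K : Set (ellOne S)) (f : X → ellOne S),
        IsSimplicialComplex K ∧ (∀ x, f x ∈ K) ∧ IsLipschitzLC l C f ∧
        UniformlyBounded (fun v : S => f ⁻¹' star K v) ∧
        ∀ i, ∃ v : S, U i ⊆ f ⁻¹' star K v

/-- `X` has asymptotic dimension at most `n`. -/
def AsdimLE (X : Type u) [MetricSpace X] (n : ℕ) : Prop :=
  ∀ R : ℝ, 0 < R → ∃ (ι : Type u) (U : ι → Set X),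
    IsCover U ∧ UniformlyBounded U ∧ MultiplicityLE U (n + 1) ∧
    ENNReal.ofReal R ≤ lebesgue U

/-- `X` has Property A. -/
def PropertyA (X : Type u) [MetricSpace X] : Prop :=
  ∀ R ε : ℝ, 0 < R → 0 < ε →
    ∃ (M : ℝ) (S : Type u) (φ : S → X → ℝ), 0 < M ∧
      (∀ s x, 0 ≤ φ s x ∧ φ s x ≤ 1) ∧
      (∀ x, (support fun s => φ s x).Finite) ∧
      (∀ x, ∑' s, φ s x = 1) ∧
      (∀ x y, dist x y ≤ R → ∑' s, |φ s x - φ s y| < ε) ∧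
      (∀ s, ∀ x ∈ support (φ s), ∀ y ∈ support (φ s), dist x y ≤ M)

/-- `f` has `(R, ε)` variation. -/
def HasVariation {X Y : Type*} [MetricSpace X] [MetricSpace Y] (R ε : ℝ) (f : X → Y) : Prop :=
  ∀ x y, dist x y ≤ R → dist (f x) (f y) < ε

/-- `g` is a coarse embedding. -/
def CoarseEmbedding {X Y : Type*} [MetricSpace X] [MetricSpace Y] (g : X → Y) : Prop :=
  ∃ ρminus ρplus : ℝ → ℝ, Monotone ρminus ∧ Monotone ρplus ∧
    Filter.Tendsto ρminus Filter.atTop Filter.atTop ∧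
    ∀ x y, ρminus (dist x y) ≤ dist (g x) (g y) ∧ dist (g x) (g y) ≤ ρplus (dist x y)

/-- `X` has bounded geometry: balls of any fixed radius have uniformly bounded cardinality. -/
def BoundedGeometry (X : Type*) [MetricSpace X] : Prop :=
  ∀ r : ℝ, 0 < r → ∃ N : ℕ, ∀ x : X, (Metric.ball x r).encard ≤ N

/-- if for each `δ > 0` there is a `(δ, δ)`-Lipschitz map
`f : X → Δ(S)^(n)` with `{f⁻¹(st s)}` uniformly bounded, then `asdim X ≤ n`. -/
theorem asdimLE_of_skeleton_maps (X : Type u) [MetricSpace X] (n : ℕ)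
    (h : ∀ δ : ℝ, 0 < δ → ∃ (S : Type u) (f : X → ellOne S),
      (∀ x, f x ∈ skeleton S n) ∧ IsLipschitzLC δ δ f ∧
      UniformlyBounded (fun s : S => f ⁻¹' star (skeleton S n) s)) :
    AsdimLE X n := by
  intro R hR
  have hn1 : (0:ℝ) < (n:ℝ) + 1 := by positivity
  set δ : ℝ := 1 / (2 * ((n:ℝ) + 1) * (R + 1)) with hδdef
  have hδ : 0 < δ := by positivity
  obtain ⟨S, f, hmem, hlip, hub⟩ := h δ hδ
  set U : S → Set X := fun s => f ⁻¹' star (skeleton S n) s with hU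
  have hxU : ∀ x s, x ∈ U s ↔ 0 < f x s := by
    intro x s
    simp [hU, _root_.star, Set.mem_preimage, hmem x]
  have hpt : ∀ x y (s : S), |f x s - f y s| ≤ δ * dist x y + δ := by
    intro x y s
    have h1 : ‖(f x - f y) s‖ ≤ ‖f x - f y‖ :=
      lp.norm_apply_le_norm one_ne_zero (f x - f y) s
    have h2 : (f x - f y) s = f x s - f y s := by
      simp
    rw [h2] at h1
    calc |f x s - f y s| ≤ ‖f x - f y‖ := h1
      _ = dist (f x) (f y) := (dist_eq_norm _ _).symm
      _ ≤ δ * dist x y + δ := hlip x y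
  have hbig : ∀ x, ∃ v, 1 / ((n:ℝ)+1) ≤ f x v := by
    intro x
    obtain ⟨⟨hpos, hfin, hsum⟩, hcard⟩ := hmem x
    have hsum' : ∑ s ∈ hfin.toFinset, f x s = 1 := by
      rw [← hsum]
      exact (tsum_eq_sum (by intro b hb; simpa using hb)).symm
    have hne : hfin.toFinset.Nonempty := by
      by_contra hc
      rw [Finset.not_nonempty_iff_eq_empty] at hc
      rw [hc, Finset.sum_empty] at hsum'
      norm_num at hsum'
    obtain ⟨v, hv, hmax⟩ := hfin.toFinset.exists_max_image (fun s => f x s) hne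
    have hcard' : hfin.toFinset.card ≤ n + 1 := by
      rw [hfin.encard_eq_coe_toFinset_card] at hcard
      exact_mod_cast hcard
    have h1 : (1:ℝ) ≤ (hfin.toFinset.card : ℝ) * f x v := by
      calc (1:ℝ) = ∑ s ∈ hfin.toFinset, f x s := hsum'.symm
        _ ≤ ∑ _s ∈ hfin.toFinset, f x v := Finset.sum_le_sum (fun i hi => hmax i hi)
        _ = hfin.toFinset.card * f x v := by rw [Finset.sum_const, nsmul_eq_mul]
    refine ⟨v, ?_⟩
    have hfv : 0 ≤ f x v := hpos v
    have hc' : (hfin.toFinset.card : ℝ) ≤ (n:ℝ) + 1 := by exact_mod_cast hcard'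
    rw [div_le_iff₀ hn1]
    nlinarith [mul_nonneg (sub_nonneg.mpr hc') hfv]
  refine ⟨S, U, ?_, hub, ?_, ?_⟩
  · intro x
    obtain ⟨v, hv⟩ := hbig x
    exact ⟨v, (hxU x v).mpr (lt_of_lt_of_le (by positivity) hv)⟩
  · intro x
    have hsub : {i | 0 < Metric.infDist x ((U i)ᶜ)} ⊆ support (f x : S → ℝ) := by
      intro s hs
      simp only [Set.mem_setOf_eq] at hs
      have hxc : x ∉ (U s)ᶜ := by
        intro hx
        have := Metric.infDist_zero_of_mem hx
        linarith
      have hx : x ∈ U s := not_not.mp hxc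
      exact ne_of_gt ((hxU x s).mp hx)
    calc {i | 0 < Metric.infDist x ((U i)ᶜ)}.encard
        ≤ (support (f x : S → ℝ)).encard := Set.encard_mono hsub
      _ ≤ (n : ℕ∞) + 1 := (hmem x).2
      _ = ((n+1 : ℕ) : ℕ∞) := by push_cast; ring
  · refine le_iInf fun x => ?_
    obtain ⟨v, hv⟩ := hbig x
    refine le_trans ?_ (le_iSup _ v)
    refine EMetric.le_infEdist.mpr ?_
    intro y hy
    by_contra hlt
    push_neg at hlt
    have hdy : dist x y < R := edist_lt_ofReal.mp hlt
    apply hy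
    show y ∈ U v
    refine (hxU y v).mpr ?_
    have h3 : f x v - f y v ≤ δ * dist x y + δ := le_trans (le_abs_self _) (hpt x y v)
    have heq : δ * (R + 1) = 1 / (2 * ((n:ℝ) + 1)) := by
      rw [hδdef]; field_simp
    have hmul : δ * dist x y < δ * R := by
      exact mul_lt_mul_of_pos_left hdy hδ
    have h4 : 1 / ((n:ℝ)+1) = 2 * (1 / (2 * ((n:ℝ)+1))) := by
      field_simp
    nlinarith [hv, h3, hmul, heq, hδ, hn1]

end
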